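/- For any n ≥ 2, there is a bijection between planar layouts of irreducible planar tanglegrams of size n and ordered pairs of triangulations of a convex (n+1)-gon that share no diagonal. -/

import Mathlib

/-- A diagonal of the convex `n`-gon: an unordered pair of distinct,
non-adjacent vertices (vertices labeled by `Fin n` in cyclic order). -/
def IsDiag (n : ℕ) (d : Sym2 (Fin n)) : Prop :=
  ∃ a b : Fin n, d = s(a, b) ∧ a ≠ b ∧
    (a.val + 1) % n ≠ b.val ∧ (b.val + 1) % n ≠ a.val

/-- Two diagonals of the convex `n`-gon cross (their endpoints strictly
interleave around the polygon). -/
def Crosses (n : ℕ) (d e : Sym2 (Fin n)) : Prop :=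
  (∃ a b c c' : Fin n, d = s(a, b) ∧ e = s(c, c') ∧ a < c ∧ c < b ∧ b < c') ∨
  (∃ a b c c' : Fin n, e = s(a, b) ∧ d = s(c, c') ∧ a < c ∧ c < b ∧ b < c')

/-- A triangulation of the convex `n`-gon: a maximal set of pairwise
noncrossing diagonals. -/
structure Triangulation (n : ℕ) where
  diags : Finset (Sym2 (Fin n))
  isDiag : ∀ d ∈ diags, IsDiag n d
  noncross : ∀ d ∈ diags, ∀ e ∈ diags, ¬ Crosses n d e
  maximal : ∀ d, IsDiag n d → (∀ e ∈ diags, ¬ Crosses n d e) → d ∈ diags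

/-- `IsFlip T d T'` : the triangulation `T'` is obtained from `T` by flipping
the diagonal `d` (removing `d`, keeping all other diagonals, and inserting the
opposite diagonal of the resulting quadrilateral). -/
def IsFlip {n : ℕ} (T : Triangulation n) (d : Sym2 (Fin n)) (T' : Triangulation n) : Prop :=
  d ∈ T.diags ∧ d ∉ T'.diags ∧ ∀ e ∈ T.diags, e ≠ d → e ∈ T'.diags

/-- Two triangulations are related by a single diagonal flip. -/
def FlipAdj {n : ℕ} (T T' : Triangulation n) : Prop := ∃ d, IsFlip T d T'

/-- `d'` is the new diagonal created when passing from `T` to `T'`. -/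
def NewDiag {n : ℕ} (T T' : Triangulation n) (d' : Sym2 (Fin n)) : Prop :=
  d' ∈ T'.diags ∧ d' ∉ T.diags

/-- Flip of a pair of triangulations at a diagonal of the first coordinate:
flip it there, and if the new diagonal lies in the second triangulation,
flip it there as well. -/
def PairFlipFst {n : ℕ} (p q : Triangulation n × Triangulation n) : Prop :=
  ∃ d T₁' d', IsFlip p.1 d T₁' ∧ NewDiag p.1 T₁' d' ∧
    ((d' ∉ p.2.diags ∧ q = (T₁', p.2)) ∨
     (d' ∈ p.2.diags ∧ ∃ T₂', IsFlip p.2 d' T₂' ∧ q = (T₁', T₂')))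

/-- Flip of a pair of triangulations at a diagonal of the second coordinate. -/
def PairFlipSnd {n : ℕ} (p q : Triangulation n × Triangulation n) : Prop :=
  ∃ d T₂' d', IsFlip p.2 d T₂' ∧ NewDiag p.2 T₂' d' ∧
    ((d' ∉ p.1.diags ∧ q = (p.1, T₂')) ∨
     (d' ∈ p.1.diags ∧ ∃ T₁', IsFlip p.1 d' T₁' ∧ q = (T₁', T₂')))

/-- The flip operation on ordered pairs of triangulations. -/
def PairFlip {n : ℕ} (p q : Triangulation n × Triangulation n) : Prop :=
  PairFlipFst p q ∨ PairFlipSnd p q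

/-- Vertices of the flip graph `D_n`: ordered pairs of triangulations of the
convex `n`-gon sharing no diagonal. -/
def DVert (n : ℕ) := {p : Triangulation n × Triangulation n // Disjoint p.1.diags p.2.diags}

/-- The flip graph `D_n` on ordered pairs of disjoint triangulations. -/
def DGraph (n : ℕ) : SimpleGraph (DVert n) where
  Adj p q := p ≠ q ∧ (PairFlip p.1 q.1 ∨ PairFlip q.1 p.1)
  symm := ⟨fun _ _ h => ⟨h.1.symm, h.2.symm⟩⟩
  loopless := ⟨fun _ h => h.1 rfl⟩

/-- The flip graph `T_n` on all triangulations of the convex `n`-gon. -/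
def TriGraph (n : ℕ) : SimpleGraph (Triangulation n) where
  Adj T T' := T ≠ T' ∧ (FlipAdj T T' ∨ FlipAdj T' T)
  symm := ⟨fun _ _ h => ⟨h.1.symm, h.2.symm⟩⟩
  loopless := ⟨fun _ h => h.1 rfl⟩

/-- Vertices of `T_n(S)`: triangulations disjoint from `S`. -/
def TnSVert (n : ℕ) (S : Triangulation n) := {T : Triangulation n // Disjoint T.diags S.diags}

/-- The flip graph `T_n(S)` induced on triangulations disjoint from `S`. -/
def TnS (n : ℕ) (S : Triangulation n) : SimpleGraph (TnSVert n S) where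
  Adj T T' := T ≠ T' ∧ (FlipAdj T.1 T'.1 ∨ FlipAdj T'.1 T.1)
  symm := ⟨fun _ _ h => ⟨h.1.symm, h.2.symm⟩⟩
  loopless := ⟨fun _ h => h.1 rfl⟩

/-- A rooted plane binary tree (leaves unlabeled; children ordered). -/
inductive PTree : Type
  | leaf : PTree
  | node : PTree → PTree → PTree

/-- Number of leaves of a plane binary tree. -/
def PTree.leaves : PTree → ℕ
  | .leaf => 1
  | .node l r => l.leaves + r.leaves

/-- The set of diagonals of the plane dual triangulation of a plane binary
tree whose leaves occupy positions `a, a+1, …, a + leaves - 1`: the subtree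
spanning leaf positions `[b, c)` contributes the diagonal `(b, c)` of the
polygon whenever it is a proper subtree with at least two leaves. -/
def PTree.dualAux : PTree → ℕ → Finset (Sym2 ℕ)
  | .leaf, _ => ∅
  | .node l r, a =>
      l.dualAux a ∪ r.dualAux (a + l.leaves) ∪
        (if 2 ≤ l.leaves then {s(a, a + l.leaves)} else ∅) ∪
        (if 2 ≤ r.leaves then {s(a + l.leaves, a + l.leaves + r.leaves)} else ∅)

/-- The plane dual triangulation of a plane binary tree `P` with `k` leaves,
as the set of diagonals of a convex `(k+1)`-gon with vertices `0, 1, …, k`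
(the standard Catalan bijection). -/
def PTree.dual (P : PTree) : Finset (Sym2 ℕ) := P.dualAux 0

/-- The rotation relation on plane binary trees: `Rot P P'` holds when `P'`
is obtained from `P` by a single rotation at a (necessarily non-root,
internal) vertex. -/
inductive Rot : PTree → PTree → Prop
  | base (P₁ P₂ P₃ : PTree) :
      Rot (.node (.node P₁ P₂) P₃) (.node P₁ (.node P₂ P₃))
  | base' (P₁ P₂ P₃ : PTree) :
      Rot (.node P₁ (.node P₂ P₃)) (.node (.node P₁ P₂) P₃)
  | left {L L' : PTree} (R : PTree) : Rot L L' → Rot (.node L R) (.node L' R)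
  | right (L : PTree) {R R' : PTree} : Rot R R' → Rot (.node L R) (.node L R')

/-- `SubAt P a u` : `u` is a subtree of `P` whose leaves occupy the positions
`a, a+1, …, a + u.leaves - 1` among the leaves of `P` (left to right). -/
inductive SubAt : PTree → ℕ → PTree → Prop
  | refl (t : PTree) : SubAt t 0 t
  | left {l u : PTree} {a : ℕ} (r : PTree) : SubAt l a u → SubAt (.node l r) a u
  | right (l : PTree) {r u : PTree} {a : ℕ} :
      SubAt r a u → SubAt (.node l r) (l.leaves + a) u

/-- A planar layout, given by its pair of plane binary trees (the matching
joins the leaves in equal positions), has a proper subtanglegram iff both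
trees have a subtree with at least `2` leaves occupying the same proper
interval of leaf positions. `IrredLayout` says there is no such pair, i.e.
the layout is a layout of an irreducible tanglegram. -/
def IrredLayout (p : PTree × PTree) : Prop :=
  ¬ ∃ (a : ℕ) (u v : PTree), SubAt p.1 a u ∧ SubAt p.2 a v ∧
      u.leaves = v.leaves ∧ 2 ≤ u.leaves ∧ u.leaves < p.1.leaves


namespace Aux

def StrIntl (x y x' y' : ℕ) : Prop :=
  (x < x' ∧ x' < y ∧ y < y') ∨ (x' < x ∧ x < y' ∧ y' < y)

lemma leaves_pos (P : PTree) : 1 ≤ P.leaves := by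
  induction P with
  | leaf => simp [PTree.leaves]
  | node l r hl hr => simp only [PTree.leaves]; omega

lemma leaves_eq_one {P : PTree} (h : P.leaves = 1) : P = .leaf := by
  cases P with
  | leaf => rfl
  | node l r =>
    simp only [PTree.leaves] at h
    have := leaves_pos l; have := leaves_pos r; omega

lemma subAt_bound {P u : PTree} {a : ℕ} (h : SubAt P a u) :
    a + u.leaves ≤ P.leaves := by
  induction h with
  | refl t => omega
  | @left l u a r h ih =>
    simp only [PTree.leaves]; have := leaves_pos r; omega
  | @right l r u a h ih => simp only [PTree.leaves]; omega

lemma laminar {P u v : PTree} {a b : ℕ} (ha : SubAt P a u) (hb : SubAt P b v) :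
    a + u.leaves ≤ b ∨ b + v.leaves ≤ a ∨
    (a ≤ b ∧ b + v.leaves ≤ a + u.leaves) ∨ (b ≤ a ∧ a + u.leaves ≤ b + v.leaves) := by
  induction ha generalizing b v with
  | refl t => have := subAt_bound hb; omega
  | @left l u a r h ih =>
    cases hb with
    | refl =>
      have h1 := subAt_bound (SubAt.left r h)
      omega
    | left _ hb' => exact ih hb'
    | right _ hb' =>
      have h1 := subAt_bound h
      omega
  | @right l r u a h ih =>
    cases hb with
    | refl =>
      have h1 := subAt_bound (SubAt.right l h)
      omega
    | left _ hb' =>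
      have h1 := subAt_bound hb'
      omega
    | right _ hb' =>
      have := ih hb'
      omega

def Ival (P : PTree) (x y : ℕ) : Prop :=
  ∃ u, SubAt P x u ∧ y = x + u.leaves ∧ 2 ≤ u.leaves

lemma ival_bound {P : PTree} {x y : ℕ} (h : Ival P x y) :
    x + 2 ≤ y ∧ y ≤ P.leaves := by
  obtain ⟨u, hu, rfl, h2⟩ := h
  have := subAt_bound hu; omega

lemma noncross_ival {P : PTree} {x y x' y' : ℕ} (h : Ival P x y) (h' : Ival P x' y') :
    ¬ StrIntl x y x' y' := by
  obtain ⟨u, hu, rfl, h2⟩ := h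
  obtain ⟨u', hu', rfl, h2'⟩ := h'
  have := laminar hu hu'
  simp only [StrIntl]
  omega

lemma subAt_node {l r u : PTree} {a : ℕ} (h : SubAt (.node l r) a u) :
    (a = 0 ∧ u = .node l r) ∨ SubAt l a u ∨ (∃ b, a = l.leaves + b ∧ SubAt r b u) := by
  cases h with
  | refl => exact Or.inl ⟨rfl, rfl⟩
  | left _ h' => exact Or.inr (Or.inl h')
  | right _ h' => exact Or.inr (Or.inr ⟨_, rfl, h'⟩)

lemma maximal_ival {P : PTree} {x y : ℕ}
    (h2 : x + 2 ≤ y) (hy : y ≤ P.leaves) (hp : x ≠ 0 ∨ y ≠ P.leaves)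
    (hnc : ∀ x' u, SubAt P x' u → 2 ≤ u.leaves → (x' ≠ 0 ∨ x' + u.leaves ≠ P.leaves) →
      ¬ StrIntl x y x' (x' + u.leaves)) :
    Ival P x y := by
  induction P generalizing x y with
  | leaf => simp only [PTree.leaves] at hy; omega
  | node l r ihl ihr =>
    have hm : 1 ≤ l.leaves := leaves_pos l
    have hr1 : 1 ≤ r.leaves := leaves_pos r
    have hn : (PTree.node l r).leaves = l.leaves + r.leaves := rfl
    rcases le_or_gt y l.leaves with hyl | hyl
    · -- interval inside left subtree
      by_cases hfull : x = 0 ∧ y = l.leaves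
      · obtain ⟨rfl, rfl⟩ := hfull
        exact ⟨l, SubAt.left r (SubAt.refl l), by omega, by omega⟩
      · have := ihl h2 hyl (by omega)
          (fun x' u hu h2u _ => hnc x' u (SubAt.left r hu) h2u
            (Or.inr (by have := subAt_bound hu; omega)))
        obtain ⟨u, hu, hyu, h2u⟩ := this
        exact ⟨u, SubAt.left r hu, hyu, h2u⟩
    · rcases le_or_gt l.leaves x with hxl | hxl
      · -- interval inside right subtree
        by_cases hfull : x = l.leaves ∧ y = l.leaves + r.leaves
        · obtain ⟨rfl, rfl⟩ := hfull
          refine ⟨r, ?_, by omega, by omega⟩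
          simpa using SubAt.right l (SubAt.refl r)
        · have key := ihr (x := x - l.leaves) (y := y - l.leaves)
            (by omega) (by omega) (by omega)
            (fun x' u hu h2u _ => by
              have hcc := hnc (l.leaves + x') u (SubAt.right l hu) h2u (Or.inl (by omega))
              simp only [StrIntl] at hcc ⊢
              omega)
          obtain ⟨u, hu, hyu, h2u⟩ := key
          refine ⟨u, ?_, by omega, h2u⟩
          have := SubAt.right l hu
          rwa [show l.leaves + (x - l.leaves) = x by omega] at this
      · -- x < l.leaves < y : contradiction
        exfalso
        rcases Nat.eq_zero_or_pos x with hx0 | hx0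
        · have hy' : y ≠ l.leaves + r.leaves := by
            rcases hp with h | h
            · omega
            · rw [hn] at h; exact h
          have h2r : 2 ≤ r.leaves := by omega
          have := hnc l.leaves r (by simpa using SubAt.right l (SubAt.refl r)) h2r
            (Or.inl (by omega))
          exact this (Or.inl (by omega))
        · have h2l : 2 ≤ l.leaves := by omega
          have := hnc 0 l (SubAt.left r (SubAt.refl l)) h2l (Or.inr (by omega))
          exact this (Or.inr (by omega))

lemma ival_zero {l r : PTree} {t : ℕ} (h : Ival (.node l r) 0 t) :
    t ≤ l.leaves ∨ t = l.leaves + r.leaves := by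
  obtain ⟨u, hu, rfl, h2⟩ := h
  have := leaves_pos l
  rcases subAt_node hu with ⟨_, rfl⟩ | h' | ⟨b, hb, h'⟩
  · right; simp only [PTree.leaves]; omega
  · left; have := subAt_bound h'; omega
  · omega

lemma split_le {l r l' r' : PTree}
    (hle : l.leaves + r.leaves = l'.leaves + r'.leaves)
    (hiff : ∀ x y, (x ≠ 0 ∨ y ≠ (PTree.node l r).leaves) →
      (Ival (.node l r) x y → Ival (.node l' r') x y)) :
    l.leaves ≤ l'.leaves := by
  have hm := leaves_pos l; have hm' := leaves_pos l'
  have hr := leaves_pos r; have hr' := leaves_pos r'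
  rcases le_or_gt l.leaves 1 with h1 | h1
  · omega
  · have hI : Ival (.node l r) 0 l.leaves :=
      ⟨l, SubAt.left r (SubAt.refl l), by omega, by omega⟩
    have := hiff 0 l.leaves (Or.inr (by simp only [PTree.leaves]; omega)) hI
    rcases ival_zero this with h | h
    · exact h
    · omega

lemma eq_of_ival_eq {P : PTree} : ∀ {Q : PTree}, P.leaves = Q.leaves →
    (∀ x y, (x ≠ 0 ∨ y ≠ P.leaves) → (Ival P x y ↔ Ival Q x y)) → P = Q := by
  induction P with
  | leaf =>
    intro Q hl _
    simp only [PTree.leaves] at hl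
    exact (leaves_eq_one hl.symm).symm
  | node l r ihl ihr =>
    intro Q hl hiff
    cases Q with
    | leaf =>
      exfalso
      have := leaves_pos l; have := leaves_pos r
      simp only [PTree.leaves] at hl; omega
    | node l' r' =>
      simp only [PTree.leaves] at hl
      have hm := leaves_pos l; have hm' := leaves_pos l'
      have hrr := leaves_pos r; have hrr' := leaves_pos r'
      have hL1 : l.leaves ≤ l'.leaves :=
        split_le hl (fun x y hp h => (hiff x y hp).1 h)
      have hL2 : l'.leaves ≤ l.leaves := by
        refine split_le hl.symm (fun x y hp h => (hiff x y ?_).2 h)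
        simp only [PTree.leaves] at hp ⊢; omega
      have hLeq : l.leaves = l'.leaves := le_antisymm hL1 hL2
      have hl_eq : l = l' := by
        refine ihl hLeq (fun x y hp => ?_)
        constructor
        · intro hI
          have hb := ival_bound hI
          have hPI : Ival (.node l r) x y := by
            obtain ⟨u, hu, hy, h2⟩ := hI
            exact ⟨u, SubAt.left r hu, hy, h2⟩
          have := (hiff x y (by simp only [PTree.leaves]; omega)).1 hPI
          obtain ⟨u, hu, hy, h2⟩ := this
          rcases subAt_node hu with ⟨rfl, rfl⟩ | h' | ⟨b, hb', h'⟩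
          · exfalso; simp only [PTree.leaves] at hy; omega
          · exact ⟨u, h', hy, h2⟩
          · exfalso; omega
        · intro hI
          have hb := ival_bound hI
          rw [← hLeq] at hb
          have hPI : Ival (.node l' r') x y := by
            obtain ⟨u, hu, hy, h2⟩ := hI
            exact ⟨u, SubAt.left r' hu, hy, h2⟩
          have := (hiff x y (by simp only [PTree.leaves]; omega)).2 hPI
          obtain ⟨u, hu, hy, h2⟩ := this
          rcases subAt_node hu with ⟨rfl, rfl⟩ | h' | ⟨b, hb', h'⟩
          · exfalso; simp only [PTree.leaves] at hy; omega
          · exact ⟨u, h', hy, h2⟩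
          · exfalso; omega
      have hr_eq : r = r' := by
        refine ihr (by omega) (fun x y hp => ?_)
        constructor
        · intro hI
          have hPI : Ival (.node l r) (l.leaves + x) (l.leaves + y) := by
            obtain ⟨u, hu, hy, h2⟩ := hI
            exact ⟨u, SubAt.right l hu, by omega, h2⟩
          have := (hiff _ _ (Or.inl (by omega))).1 hPI
          obtain ⟨u, hu, hy, h2⟩ := this
          rcases subAt_node hu with ⟨h0, rfl⟩ | h' | ⟨b, hb', h'⟩
          · exfalso; omega
          · exfalso; have := subAt_bound h'; omega
          · rw [hLeq] at hb'
            have hbx : b = x := by omega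
            subst hbx
            exact ⟨u, h', by omega, h2⟩
        · intro hI
          have hPI : Ival (.node l' r') (l'.leaves + x) (l'.leaves + y) := by
            obtain ⟨u, hu, hy, h2⟩ := hI
            exact ⟨u, SubAt.right l' hu, by omega, h2⟩
          rw [← hLeq] at hPI
          have := (hiff _ _ (Or.inl (by omega))).2 hPI
          obtain ⟨u, hu, hy, h2⟩ := this
          rcases subAt_node hu with ⟨h0, rfl⟩ | h' | ⟨b, hb', h'⟩
          · exfalso; omega
          · exfalso; have := subAt_bound h'; omega
          · have hbx : b = x := by omega
            subst hbx
            exact ⟨u, h', by omega, h2⟩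
      rw [hl_eq, hr_eq]

open Classical in
lemma exists_tree : ∀ k : ℕ, 1 ≤ k → ∀ D : ℕ → ℕ → Prop,
    (∀ x y, D x y → x + 2 ≤ y ∧ y ≤ k ∧ (x ≠ 0 ∨ y ≠ k)) →
    (∀ x y x' y', D x y → D x' y' → ¬ StrIntl x y x' y') →
    (∀ x y, x + 2 ≤ y → y ≤ k → (x ≠ 0 ∨ y ≠ k) →
      (∀ x' y', D x' y' → ¬ StrIntl x y x' y') → D x y) →
    ∃ P : PTree, P.leaves = k ∧ ∀ x y, D x y ↔ (Ival P x y ∧ (x ≠ 0 ∨ y ≠ k)) := by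
  intro k
  induction k using Nat.strong_induction_on with
  | _ k ih =>
  intro hk D hvalid hnc hmax
  rcases le_or_gt k 1 with hk1 | hk1
  · -- k = 1
    have hk1' : k = 1 := le_antisymm hk1 hk
    subst hk1'
    refine ⟨.leaf, rfl, fun x y => ?_⟩
    constructor
    · intro h; have := hvalid x y h; omega
    · rintro ⟨⟨u, hu, rfl, h2⟩, hp⟩
      exfalso
      have := subAt_bound hu
      simp only [PTree.leaves] at this; omega
  · -- k ≥ 2 : find the split point m
    obtain ⟨m, hm1, hmk, hDm, hmtop⟩ :
        ∃ m, 1 ≤ m ∧ m < k ∧ (D 0 m ∨ m = 1) ∧ (∀ t, D 0 t → t ≤ m) := by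
      by_cases hS : ((Finset.range (k+1)).filter (fun t => D 0 t)).Nonempty
      · have hmem := Finset.max'_mem _ hS
        have hD0 : D 0 (((Finset.range (k+1)).filter (fun t => D 0 t)).max' hS) :=
          (Finset.mem_filter.mp hmem).2
        have hv := hvalid 0 _ hD0
        refine ⟨_, by omega, by omega, Or.inl hD0, ?_⟩
        intro t ht
        refine Finset.le_max' _ t ?_
        have := hvalid 0 t ht
        exact Finset.mem_filter.mpr ⟨Finset.mem_range.mpr (by omega), ht⟩
      · refine ⟨1, le_refl 1, by omega, Or.inr rfl, ?_⟩
        intro t ht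
        exfalso
        exact hS ⟨t, Finset.mem_filter.mpr ⟨Finset.mem_range.mpr (by have := hvalid 0 t ht; omega), ht⟩⟩
    -- every diagonal is on one side of m
    have hsplit : ∀ x y, D x y → y ≤ m ∨ m ≤ x := by
      intro x y hd
      by_contra hcon
      push_neg at hcon
      obtain ⟨hym, hxm⟩ := hcon
      rcases Nat.eq_zero_or_pos x with rfl | hx0
      · exact absurd (hmtop y hd) (by omega)
      · have hD0m : D 0 m := by
          rcases hDm with h | h
          · exact h
          · omega
        exact hnc x y 0 m hd hD0m (Or.inr ⟨by omega, by omega, by omega⟩)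
    -- D m k or m = k - 1
    have hDmk : D m k ∨ m = k - 1 := by
      by_cases hm' : m = k - 1
      · exact Or.inr hm'
      · left
        refine hmax m k (by omega) (le_refl k) (Or.inl (by omega)) ?_
        intro x' y' hd
        have hv := hvalid x' y' hd
        have := hsplit x' y' hd
        simp only [StrIntl]
        omega
    -- restricted diagonal predicates
    set D₁ : ℕ → ℕ → Prop := fun x y => D x y ∧ y ≤ m ∧ ¬(x = 0 ∧ y = m) with hD₁def
    set D₂ : ℕ → ℕ → Prop := fun x y => D (m + x) (m + y) ∧ ¬(x = 0 ∧ y = k - m) with hD₂def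
    have hP₁ : ∃ P : PTree, P.leaves = m ∧
        ∀ x y, D₁ x y ↔ (Ival P x y ∧ (x ≠ 0 ∨ y ≠ m)) := by
      refine ih m (by omega) (by omega) D₁ ?_ ?_ ?_
      · rintro x y ⟨hd, hym, hprop⟩
        have := hvalid x y hd
        refine ⟨by omega, hym, by omega⟩
      · rintro x y x' y' ⟨hd, _, _⟩ ⟨hd', _, _⟩
        exact hnc x y x' y' hd hd'
      · intro x y h2 hym hprop hcand
        have hDxy : D x y := by
          refine hmax x y h2 (by omega) (Or.inr (by omega)) ?_
          intro x' y' hd'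
          have hv' := hvalid x' y' hd'
          rcases hsplit x' y' hd' with hy'm | hmx'
          · by_cases hfull : x' = 0 ∧ y' = m
            · simp only [StrIntl]; omega
            · exact hcand x' y' ⟨hd', hy'm, hfull⟩
          · simp only [StrIntl]; omega
        exact ⟨hDxy, hym, by omega⟩
    have hP₂ : ∃ P : PTree, P.leaves = k - m ∧
        ∀ x y, D₂ x y ↔ (Ival P x y ∧ (x ≠ 0 ∨ y ≠ k - m)) := by
      refine ih (k - m) (by omega) (by omega) D₂ ?_ ?_ ?_
      · rintro x y ⟨hd, hprop⟩
        have := hvalid (m + x) (m + y) hd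
        refine ⟨by omega, by omega, by omega⟩
      · rintro x y x' y' ⟨hd, _⟩ ⟨hd', _⟩
        have := hnc _ _ _ _ hd hd'
        simp only [StrIntl] at this ⊢
        omega
      · intro x y h2 hyk hprop hcand
        have hDxy : D (m + x) (m + y) := by
          refine hmax (m + x) (m + y) (by omega) (by omega) (Or.inl (by omega)) ?_
          intro x' y' hd'
          have hv' := hvalid x' y' hd'
          rcases hsplit x' y' hd' with hy'm | hmx'
          · simp only [StrIntl]; omega
          · by_cases hfull : x' = m ∧ y' = k
            · simp only [StrIntl]; omega
            · have hd₂ : D₂ (x' - m) (y' - m) := by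
                rw [hD₂def]
                refine ⟨by rwa [show m + (x' - m) = x' by omega, show m + (y' - m) = y' by omega], ?_⟩
                omega
              have := hcand _ _ hd₂
              simp only [StrIntl] at this ⊢
              omega
        exact ⟨hDxy, by omega⟩
    obtain ⟨P₁, hP₁l, hP₁iff⟩ := hP₁
    obtain ⟨P₂, hP₂l, hP₂iff⟩ := hP₂
    refine ⟨.node P₁ P₂, by simp only [PTree.leaves]; omega, ?_⟩
    intro x y
    constructor
    · intro hd
      have hv := hvalid x y hd
      refine ⟨?_, by omega⟩
      rcases hsplit x y hd with hym | hmx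
      · by_cases hfull : x = 0 ∧ y = m
        · obtain ⟨rfl, rfl⟩ := hfull
          exact ⟨P₁, SubAt.left P₂ (SubAt.refl P₁), by omega, by omega⟩
        · have := (hP₁iff x y).1 ⟨hd, hym, hfull⟩
          obtain ⟨⟨u, hu, hy, h2⟩, _⟩ := this
          exact ⟨u, SubAt.left P₂ hu, hy, h2⟩
      · by_cases hfull : x = m ∧ y = k
        · obtain ⟨rfl, rfl⟩ := hfull
          refine ⟨P₂, ?_, by omega, by omega⟩
          have := SubAt.right P₁ (SubAt.refl P₂)
          rwa [hP₁l, Nat.add_zero] at this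
        · have hd₂ : D₂ (x - m) (y - m) := by
            rw [hD₂def]
            refine ⟨by rwa [show m + (x - m) = x by omega, show m + (y - m) = y by omega], by omega⟩
          have := (hP₂iff _ _).1 hd₂
          obtain ⟨⟨u, hu, hy, h2⟩, _⟩ := this
          refine ⟨u, ?_, by omega, h2⟩
          have := SubAt.right P₁ hu
          rwa [hP₁l, show m + (x - m) = x by omega] at this
    · rintro ⟨⟨u, hu, rfl, h2⟩, hprop⟩
      rcases subAt_node hu with ⟨rfl, rfl⟩ | h' | ⟨b, hb', h'⟩
      · exfalso
        simp only [PTree.leaves] at hprop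
        omega
      · -- inside P₁
        have hbnd := subAt_bound h'
        rw [hP₁l] at hbnd
        by_cases hfull : x = 0 ∧ x + u.leaves = m
        · obtain ⟨rfl, h⟩ := hfull
          rw [h]
          rcases hDm with hD | hD
          · exact hD
          · omega
        · have := (hP₁iff x (x + u.leaves)).2 ⟨⟨u, h', rfl, h2⟩, by omega⟩
          exact this.1
      · -- inside P₂
        rw [hP₁l] at hb'
        subst hb'
        have hbnd := subAt_bound h'
        rw [hP₂l] at hbnd
        by_cases hfull : b = 0 ∧ b + u.leaves = k - m
        · obtain ⟨rfl, h⟩ := hfull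
          have hyk : m + 0 + u.leaves = k := by omega
          rw [hyk, show m + 0 = m by omega]
          rcases hDmk with hD | hD
          · exact hD
          · omega
        · have := (hP₂iff b (b + u.leaves)).2 ⟨⟨u, h', rfl, h2⟩, by omega⟩
          have h' := this.1
          rwa [show m + b + u.leaves = m + (b + u.leaves) by omega]

lemma isDiag_core {n x y : ℕ} (hxy : x < y) (hyn : y < n + 1)
    (h1 : (x+1) % (n+1) ≠ y) (h2 : (y+1) % (n+1) ≠ x) :
    x + 2 ≤ y ∧ (x ≠ 0 ∨ y ≠ n) := by
  have e1 : (x+1) % (n+1) = x + 1 := Nat.mod_eq_of_lt (by omega)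
  rw [e1] at h1
  rcases Nat.lt_or_ge y n with h | h
  · exact ⟨by omega, Or.inr (by omega)⟩
  · have hyn' : y = n := by omega
    subst hyn'
    rw [Nat.mod_self] at h2
    exact ⟨by omega, Or.inl (Ne.symm h2)⟩

lemma isDiag_iff {n x y : ℕ} (hx : x < n + 1) (hy : y < n + 1) (hxy : x < y) :
    IsDiag (n+1) s(⟨x,hx⟩,⟨y,hy⟩) ↔ (x + 2 ≤ y ∧ (x ≠ 0 ∨ y ≠ n)) := by
  constructor
  · rintro ⟨a, b, heq, hne, h1, h2⟩
    rcases Sym2.eq_iff.mp heq with ⟨ha, hb⟩ | ⟨ha, hb⟩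
    · have e1 : a.val = x := by rw [← ha]
      have e2 : b.val = y := by rw [← hb]
      rw [e1, e2] at h1 h2
      exact isDiag_core hxy hy h1 h2
    · have e1 : b.val = x := by rw [← ha]
      have e2 : a.val = y := by rw [← hb]
      rw [e1, e2] at h1 h2
      exact isDiag_core hxy hy h2 h1
  · rintro ⟨h2le, hp⟩
    refine ⟨⟨x,hx⟩, ⟨y,hy⟩, rfl, ?_, ?_, ?_⟩
    · simp only [ne_eq, Fin.mk.injEq]; omega
    · show (x+1) % (n+1) ≠ y
      rw [Nat.mod_eq_of_lt (by omega)]; omega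
    · show (y+1) % (n+1) ≠ x
      rcases Nat.lt_or_ge y n with h | h
      · rw [Nat.mod_eq_of_lt (by omega)]; omega
      · have : y = n := by omega
        subst this
        rw [Nat.mod_self]
        rcases hp with h' | h'
        · omega
        · omega

lemma crosses_iff {n : ℕ} {x y x' y' : ℕ} (hx : x < n+1) (hy : y < n+1)
    (hx' : x' < n+1) (hy' : y' < n+1) (hxy : x < y) (hxy' : x' < y') :
    Crosses (n+1) s(⟨x,hx⟩,⟨y,hy⟩) s(⟨x',hx'⟩,⟨y',hy'⟩) ↔ StrIntl x y x' y' := by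
  constructor
  · rintro (⟨a,b,c,c',hd,he,h1,h2,h3⟩ | ⟨a,b,c,c',hd,he,h1,h2,h3⟩) <;>
    [(rcases Sym2.eq_iff.mp hd with ⟨ha, hb⟩ | ⟨ha, hb⟩ <;>
      rcases Sym2.eq_iff.mp he with ⟨hc, hc'⟩ | ⟨hc, hc'⟩);
     (rcases Sym2.eq_iff.mp he with ⟨ha, hb⟩ | ⟨ha, hb⟩ <;>
      rcases Sym2.eq_iff.mp hd with ⟨hc, hc'⟩ | ⟨hc, hc'⟩)] <;>
    · have e1 := congrArg Fin.val ha
      have e2 := congrArg Fin.val hb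
      have e3 := congrArg Fin.val hc
      have e4 := congrArg Fin.val hc'
      simp only [Fin.val_mk] at e1 e2 e3 e4
      simp only [Fin.lt_def] at h1 h2 h3
      simp only [StrIntl]
      omega
  · rintro (⟨h1, h2, h3⟩ | ⟨h1, h2, h3⟩)
    · exact Or.inl ⟨⟨x,hx⟩, ⟨y,hy⟩, ⟨x',hx'⟩, ⟨y',hy'⟩, rfl, rfl,
        Fin.mk_lt_mk.mpr h1, Fin.mk_lt_mk.mpr h2, Fin.mk_lt_mk.mpr h3⟩
    · exact Or.inr ⟨⟨x',hx'⟩, ⟨y',hy'⟩, ⟨x,hx⟩, ⟨y,hy⟩, rfl, rfl,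
        Fin.mk_lt_mk.mpr h1, Fin.mk_lt_mk.mpr h2, Fin.mk_lt_mk.mpr h3⟩

lemma diag_rep {n : ℕ} {d : Sym2 (Fin (n+1))} (h : IsDiag (n+1) d) :
    ∃ (x y : ℕ) (hx : x < n+1) (hy : y < n+1), x < y ∧ d = s(⟨x,hx⟩,⟨y,hy⟩) := by
  obtain ⟨a, b, heq, hne, -, -⟩ := h
  have hv : a.val ≠ b.val := fun h => hne (Fin.val_injective h)
  rcases lt_or_gt_of_ne hv with hlt | hlt
  · exact ⟨a.val, b.val, a.isLt, b.isLt, hlt, heq⟩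
  · exact ⟨b.val, a.val, b.isLt, a.isLt, hlt, heq.trans (Sym2.eq_swap)⟩

open Classical in
noncomputable def triOf (n : ℕ) (P : PTree) (hP : P.leaves = n) : Triangulation (n+1) where
  diags := Finset.univ.filter (fun d => ∃ x y, ∃ (hx : x < n+1) (hy : y < n+1),
      d = s(⟨x,hx⟩,⟨y,hy⟩) ∧ Ival P x y ∧ (x ≠ 0 ∨ y ≠ n))
  isDiag := by
    intro d hd
    simp only [Finset.mem_filter, Finset.mem_univ, true_and] at hd
    obtain ⟨x, y, hx, hy, rfl, hI, hp⟩ := hd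
    have hb := ival_bound hI
    rw [hP] at hb
    exact (isDiag_iff hx hy (by omega)).mpr ⟨by omega, hp⟩
  noncross := by
    intro d hd e he
    simp only [Finset.mem_filter, Finset.mem_univ, true_and] at hd he
    obtain ⟨x, y, hx, hy, rfl, hI, hp⟩ := hd
    obtain ⟨x', y', hx', hy', rfl, hI', hp'⟩ := he
    have hb := ival_bound hI
    have hb' := ival_bound hI'
    intro hc
    exact noncross_ival hI hI'
      ((crosses_iff hx hy hx' hy' (by omega) (by omega)).mp hc)
  maximal := by
    intro d hdiag hcr
    obtain ⟨x, y, hx, hy, hxy, rfl⟩ := diag_rep hdiag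
    have hd := (isDiag_iff hx hy hxy).mp hdiag
    have hI : Ival P x y := by
      refine maximal_ival (by omega) (by omega) (by rw [hP]; omega) ?_
      intro x' u hu h2u hprop
      have hbnd := subAt_bound hu
      rw [hP] at hbnd hprop
      have hx'lt : x' < n + 1 := by omega
      have hy'lt : x' + u.leaves < n + 1 := by omega
      have hmem : (s(⟨x', hx'lt⟩, ⟨x' + u.leaves, hy'lt⟩) : Sym2 (Fin (n+1))) ∈
          Finset.univ.filter (fun d => ∃ x y, ∃ (hx : x < n+1) (hy : y < n+1),
            d = s(⟨x,hx⟩,⟨y,hy⟩) ∧ Ival P x y ∧ (x ≠ 0 ∨ y ≠ n)) := by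
        simp only [Finset.mem_filter, Finset.mem_univ, true_and]
        exact ⟨x', x' + u.leaves, hx'lt, hy'lt, rfl, ⟨u, hu, rfl, h2u⟩, hprop⟩
      have := hcr _ hmem
      exact fun hS => this
        ((crosses_iff hx hy hx'lt hy'lt hxy (by omega)).mpr hS)
    simp only [Finset.mem_filter, Finset.mem_univ, true_and]
    exact ⟨x, y, hx, hy, rfl, hI, hd.2⟩

lemma mem_triOf {n : ℕ} {P : PTree} {hP : P.leaves = n} {x y : ℕ}
    (hx : x < n+1) (hy : y < n+1) (hxy : x < y) :
    (s(⟨x,hx⟩,⟨y,hy⟩) : Sym2 (Fin (n+1))) ∈ (triOf n P hP).diags ↔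
      (Ival P x y ∧ (x ≠ 0 ∨ y ≠ n)) := by
  simp only [triOf, Finset.mem_filter, Finset.mem_univ, true_and]
  constructor
  · rintro ⟨x', y', hx', hy', heq, hI, hp⟩
    have hb := ival_bound hI
    rcases Sym2.eq_iff.mp heq with ⟨ha, hb'⟩ | ⟨ha, hb'⟩
    · have e1 := congrArg Fin.val ha
      have e2 := congrArg Fin.val hb'
      simp only [Fin.val_mk] at e1 e2
      subst e1; subst e2
      exact ⟨hI, hp⟩
    · have e1 := congrArg Fin.val ha
      have e2 := congrArg Fin.val hb'
      simp only [Fin.val_mk] at e1 e2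
      omega
  · rintro ⟨hI, hp⟩
    exact ⟨x, y, hx, hy, rfl, hI, hp⟩

lemma tri_ext {n : ℕ} {T T' : Triangulation n} (h : T.diags = T'.diags) : T = T' := by
  rcases T with ⟨d, a1, a2, a3⟩
  rcases T' with ⟨d', b1, b2, b3⟩
  have hd : d = d' := h
  subst hd
  rfl

lemma triOf_inj {n : ℕ} {P Q : PTree} (hP : P.leaves = n) (hQ : Q.leaves = n)
    (h : triOf n P hP = triOf n Q hQ) : P = Q := by
  refine eq_of_ival_eq (hP.trans hQ.symm) (fun x y hp => ?_)
  rw [hP] at hp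
  constructor
  · intro hI
    have hb := ival_bound hI
    rw [hP] at hb
    have := (mem_triOf (hP := hP) (by omega) (by omega) (by omega)).mpr ⟨hI, hp⟩
    rw [h] at this
    exact ((mem_triOf (hP := hQ) (by omega) (by omega) (by omega)).mp this).1
  · intro hI
    have hb := ival_bound hI
    rw [hQ] at hb
    have := (mem_triOf (hP := hQ) (by omega) (by omega) (by omega)).mpr ⟨hI, hp⟩
    rw [← h] at this
    exact ((mem_triOf (hP := hP) (by omega) (by omega) (by omega)).mp this).1

lemma triOf_surj {n : ℕ} (hn : 2 ≤ n) (T : Triangulation (n+1)) :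
    ∃ P : PTree, ∃ hP : P.leaves = n, triOf n P hP = T := by
  set D : ℕ → ℕ → Prop := fun x y =>
    ∃ (hx : x < n+1) (hy : y < n+1), x < y ∧ s(⟨x,hx⟩,⟨y,hy⟩) ∈ T.diags with hDdef
  obtain ⟨P, hPl, hiff⟩ := exists_tree n (by omega) D
    (by
      rintro x y ⟨hx, hy, hxy, hmem⟩
      have := (isDiag_iff hx hy hxy).mp (T.isDiag _ hmem)
      exact ⟨this.1, by omega, this.2⟩)
    (by
      rintro x y x' y' ⟨hx, hy, hxy, hmem⟩ ⟨hx', hy', hxy', hmem'⟩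
      intro hS
      exact T.noncross _ hmem _ hmem'
        ((crosses_iff hx hy hx' hy' hxy hxy').mpr hS))
    (by
      intro x y h2 hyk hprop hcand
      have hx : x < n + 1 := by omega
      have hy : y < n + 1 := by omega
      have hdiag := (isDiag_iff hx hy (by omega)).mpr ⟨h2, hprop⟩
      have hmem := T.maximal _ hdiag (by
        intro e he
        obtain ⟨x', y', hx', hy', hlt, rfl⟩ := diag_rep (T.isDiag e he)
        have hD' : D x' y' := ⟨hx', hy', hlt, he⟩
        exact fun hc => hcand x' y' hD'
          ((crosses_iff hx hy hx' hy' (by omega) hlt).mp hc))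
      exact ⟨hx, hy, by omega, hmem⟩)
  refine ⟨P, hPl, tri_ext ?_⟩
  ext d
  constructor
  · intro hd
    simp only [triOf, Finset.mem_filter, Finset.mem_univ, true_and] at hd
    obtain ⟨x, y, hx, hy, rfl, hI, hp⟩ := hd
    obtain ⟨hx2, hy2, _, hmem⟩ := (hiff x y).mpr ⟨hI, hp⟩
    exact hmem
  · intro hd
    obtain ⟨x, y, hx, hy, hlt, rfl⟩ := diag_rep (T.isDiag d hd)
    have hD : D x y := ⟨hx, hy, hlt, hd⟩
    obtain ⟨hI, hp⟩ := (hiff x y).mp hD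
    exact (mem_triOf hx hy hlt).mpr ⟨hI, hp⟩

lemma disjoint_iff_irred {n : ℕ} (P Q : PTree) (hP : P.leaves = n) (hQ : Q.leaves = n) :
    Disjoint (triOf n P hP).diags (triOf n Q hQ).diags ↔ IrredLayout (P, Q) := by
  constructor
  · intro hdisj hex
    obtain ⟨a, u, v, hu, hv, hlen, h2, hlt⟩ := hex
    have hbu : a + u.leaves ≤ n := by have := subAt_bound hu; rw [hP] at this; exact this
    have hltn : u.leaves < n := by
      have : (P, Q).1.leaves = n := hP
      omega
    have ha1 : a < n + 1 := by omega
    have ha2 : a + u.leaves < n + 1 := by omega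
    have hmem1 : (s(⟨a, ha1⟩, ⟨a + u.leaves, ha2⟩) : Sym2 (Fin (n+1))) ∈ (triOf n P hP).diags :=
      (mem_triOf _ _ (by omega)).mpr ⟨⟨u, hu, rfl, h2⟩, by omega⟩
    have hmem2 : (s(⟨a, ha1⟩, ⟨a + u.leaves, ha2⟩) : Sym2 (Fin (n+1))) ∈ (triOf n Q hQ).diags :=
      (mem_triOf _ _ (by omega)).mpr ⟨⟨v, hv, by omega, by omega⟩, by omega⟩
    exact Finset.disjoint_left.mp hdisj hmem1 hmem2
  · intro hirr
    rw [Finset.disjoint_left]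
    intro d hd1 hd2
    simp only [triOf, Finset.mem_filter, Finset.mem_univ, true_and] at hd1
    obtain ⟨x, y, hx, hy, rfl, hI, hp⟩ := hd1
    have hb := ival_bound hI
    obtain ⟨hIQ, _⟩ := (mem_triOf hx hy (by omega)).mp hd2
    obtain ⟨u, hu, hyu, h2u⟩ := hI
    obtain ⟨v, hv, hyv, h2v⟩ := hIQ
    have hbu := subAt_bound hu
    rw [hP] at hbu
    have hultn : u.leaves < n := by omega
    exact hirr ⟨x, u, v, hu, hv, by omega, h2u, by rw [hP]; omega⟩

noncomputable def treeEquiv (n : ℕ) (hn : 2 ≤ n) :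
    {P : PTree // P.leaves = n} ≃ Triangulation (n+1) :=
  Equiv.ofBijective (fun P => triOf n P.1 P.2)
    ⟨fun P Q h => Subtype.ext (triOf_inj P.2 Q.2 h), fun T => by
      obtain ⟨P, hP, hT⟩ := triOf_surj hn T
      exact ⟨⟨P, hP⟩, hT⟩⟩

end Aux

/-- For any `n ≥ 2` there is a bijection between planar
layouts of irreducible planar tanglegrams of size `n` (pairs of plane binary
trees with `n` leaves, matching by position, with no proper subtanglegram)
and ordered pairs of triangulations of a convex `(n+1)`-gon sharing no
diagonal. -/
theorem layouts_equiv_disjoint_triangulations (n : ℕ) (hn : 2 ≤ n) :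
    Nonempty
      ({p : PTree × PTree // p.1.leaves = n ∧ p.2.leaves = n ∧ IrredLayout p} ≃
        {q : Triangulation (n + 1) × Triangulation (n + 1) //
          Disjoint q.1.diags q.2.diags}) := by
  refine ⟨Equiv.trans
    (?_ : _ ≃ {q : {P : PTree // P.leaves = n} × {P : PTree // P.leaves = n} //
      IrredLayout (q.1.1, q.2.1)})
    (Equiv.subtypeEquiv (Equiv.prodCongr (Aux.treeEquiv n hn) (Aux.treeEquiv n hn)) ?_)⟩
  · exact {
      toFun := fun p => ⟨(⟨p.1.1, p.2.1⟩, ⟨p.1.2, p.2.2.1⟩), p.2.2.2⟩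
      invFun := fun q => ⟨(q.1.1.1, q.1.2.1), q.1.1.2, q.1.2.2, q.2⟩
      left_inv := fun p => rfl
      right_inv := fun q => rfl }
  · intro q
    exact (Aux.disjoint_iff_irred q.1.1 q.2.1 q.1.2 q.2.2).symm
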